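/- Let p : ℝ → ℝ be a probability density function, let c be a real number, and suppose that y ↦ e^y p(y) is Lebesgue integrable with ∫_ℝ e^y p(y) dy = e^c. Define q(y) := e^{y − c} p(y) and, for ω ∈ ℝ, M(1 + iω) := ∫_ℝ e^{(1 + iω) y} p(y) dy. Assume that the function ω ↦ Re[e^{−c} M(1 + iω)/(iω)] is Lebesgue integrable on (0, ∞). Then ∫_0^∞ q(y) dy = 1/2 + (1/π) ∫_0^∞ Re[e^{−c} M(1 + iω)/(iω)] dω. -/

import Mathlib

open MeasureTheory Real Set Filter Topology intervalIntegral

noncomputable def Si (x : ℝ) : ℝ := ∫ t in (0:ℝ)..x, Real.sin t / t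

lemma sinc_abs_le_one (x : ℝ) : |Real.sin x / x| ≤ 1 := by
  rcases eq_or_ne x 0 with h | h
  · simp [h]
  · rw [abs_div]
    exact div_le_one_of_le₀ Real.abs_sin_le_abs (abs_nonneg x)

lemma sinc_meas : Measurable (fun t : ℝ => Real.sin t / t) :=
  Real.measurable_sin.div measurable_id

lemma sinc_intervalIntegrable (a b : ℝ) :
    IntervalIntegrable (fun t : ℝ => Real.sin t / t) volume a b := by
  rw [intervalIntegrable_iff]
  refine Measure.integrableOn_of_bounded ?_ sinc_meas.aestronglyMeasurable
    (Filter.Eventually.of_forall fun x => by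
      simpa only [Real.norm_eq_abs] using sinc_abs_le_one x)
  rw [Set.uIoc]
  exact measure_Ioc_lt_top.ne

lemma Si_abs_le (x : ℝ) : |Si x| ≤ |x| := by
  have := intervalIntegral.norm_integral_le_of_norm_le_const
    (C := 1) (f := fun t : ℝ => Real.sin t / t) (a := 0) (b := x)
    (fun t _ => by simpa only [Real.norm_eq_abs] using sinc_abs_le_one t)
  simpa [Si] using this

lemma Si_neg (x : ℝ) : Si (-x) = -Si x := by
  have h : ∫ t in (0:ℝ)..x, Real.sin (-t) / (-t) = ∫ t in (-x:ℝ)..(0:ℝ), Real.sin t / t := by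
    simpa using intervalIntegral.integral_comp_neg (a := 0) (b := x)
      (fun t : ℝ => Real.sin t / t)
  have heq : ∀ t : ℝ, Real.sin (-t) / (-t) = Real.sin t / t := by
    intro t; rw [Real.sin_neg, neg_div_neg_eq]
  simp_rw [heq] at h
  rw [Si, Si, intervalIntegral.integral_symm (-x) 0, ← h,
    ← intervalIntegral.integral_symm]

lemma hasDerivAt_aux (t x : ℝ) :
    HasDerivAt (fun x => -(Real.exp (-(t*x)) * (t * Real.sin x + Real.cos x)) / (1+t^2))
      (Real.exp (-(t*x)) * Real.sin x) x := by
  have h1 : HasDerivAt (fun x : ℝ => -(t*x)) (-t) x := by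
    have := ((hasDerivAt_id x).const_mul t).neg
    simp only [mul_one] at this
    exact this
  have h2 := (h1.exp).mul (((Real.hasDerivAt_sin x).const_mul t).add (Real.hasDerivAt_cos x))
  have h3 := (h2.neg).div_const (1+t^2)
  have ht : (1:ℝ)+t^2 ≠ 0 := by positivity
  refine h3.congr_deriv ?_
  rw [div_eq_iff ht]
  simp only [Pi.add_apply]
  ring

lemma integral_exp_sin (t T : ℝ) :
    ∫ x in (0:ℝ)..T, Real.exp (-(t*x)) * Real.sin x
      = (1 - Real.exp (-(t*T)) * (t * Real.sin T + Real.cos T)) / (1+t^2) := by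
  rw [intervalIntegral.integral_eq_sub_of_hasDerivAt (fun x _ => hasDerivAt_aux t x)
    (Continuous.intervalIntegrable (by fun_prop) 0 T)]
  simp [Real.sin_zero, Real.cos_zero]
  ring

lemma integral_exp_neg_mul_Ioi {x : ℝ} (hx : 0 < x) :
    ∫ t in Ioi (0:ℝ), Real.exp (-(x*t)) = x⁻¹ := by
  have := integral_comp_mul_left_Ioi (fun u => Real.exp (-u)) 0 hx
  simp only [mul_zero] at this
  rw [this, integral_exp_neg_Ioi 0]
  simp

lemma integral_exp_neg_mul_Ioi' {x : ℝ} (hx : 0 < x) :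
    ∫ t in Ioi (0:ℝ), Real.exp (-x*t) = x⁻¹ := by
  simpa [neg_mul] using integral_exp_neg_mul_Ioi hx

lemma Si_eq {T : ℝ} (hT : 0 < T) :
    Si T = ∫ t in Ioi (0:ℝ),
      (1 - Real.exp (-(t*T)) * (t * Real.sin T + Real.cos T)) / (1+t^2) := by
  set μ := volume.restrict (Ioc (0:ℝ) T) with hμ
  set ν := volume.restrict (Ioi (0:ℝ)) with hν
  have hmeasF : AEStronglyMeasurable
      (fun z : ℝ × ℝ => Real.exp (-(z.1 * z.2)) * Real.sin z.1) (μ.prod ν) := by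
    apply Continuous.aestronglyMeasurable; fun_prop
  have hInt : Integrable (fun z : ℝ × ℝ => Real.exp (-(z.1 * z.2)) * Real.sin z.1) (μ.prod ν) := by
    rw [integrable_prod_iff hmeasF]
    constructor
    · filter_upwards [ae_restrict_mem measurableSet_Ioc] with x hx
      simpa [neg_mul] using ((exp_neg_integrableOn_Ioi 0 hx.1).mul_const (Real.sin x))
    · have hone : Integrable (fun _ : ℝ => (1:ℝ)) μ := by
        rw [hμ]
        exact integrableOn_const measure_Ioc_lt_top.ne
      refine Integrable.mono' hone hmeasF.norm.integral_prod_right' ?_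
      filter_upwards [ae_restrict_mem measurableSet_Ioc] with x hx
      show ‖∫ t, ‖Real.exp (-(x * t)) * Real.sin x‖ ∂ν‖ ≤ 1
      have hval : ∫ t, ‖Real.exp (-(x * t)) * Real.sin x‖ ∂ν = x⁻¹ * |Real.sin x| := by
        simp_rw [norm_mul, Real.norm_eq_abs, Real.abs_exp]
        rw [hν, MeasureTheory.integral_mul_const, integral_exp_neg_mul_Ioi hx.1]
      rw [Real.norm_eq_abs, hval,
        abs_of_nonneg (mul_nonneg (inv_nonneg.2 hx.1.le) (abs_nonneg _))]
      calc x⁻¹ * |Real.sin x| ≤ x⁻¹ * x := by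
            apply mul_le_mul_of_nonneg_left _ (inv_nonneg.2 hx.1.le)
            simpa [abs_of_pos hx.1] using Real.abs_sin_le_abs (x := x)
        _ = 1 := inv_mul_cancel₀ hx.1.ne'
  have swap := integral_integral_swap
    (f := fun x t => Real.exp (-(x*t)) * Real.sin x) hInt
  have hL : (∫ x, (∫ t, Real.exp (-(x*t)) * Real.sin x ∂ν) ∂μ) = Si T := by
    rw [Si, intervalIntegral.integral_of_le hT.le, hμ]
    apply setIntegral_congr_fun measurableSet_Ioc
    intro x hx
    show (∫ t in Ioi (0:ℝ), Real.exp (-(x*t)) * Real.sin x) = Real.sin x / x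
    rw [MeasureTheory.integral_mul_const, integral_exp_neg_mul_Ioi hx.1, inv_mul_eq_div]
  have hR : ∀ t : ℝ, (∫ x, Real.exp (-(x*t)) * Real.sin x ∂μ)
      = (1 - Real.exp (-(t*T)) * (t * Real.sin T + Real.cos T)) / (1+t^2) := by
    intro t
    have h1 : (∫ x, Real.exp (-(x*t)) * Real.sin x ∂μ)
        = ∫ x in (0:ℝ)..T, Real.exp (-(t*x)) * Real.sin x := by
      rw [intervalIntegral.integral_of_le hT.le, hμ]
      exact integral_congr_ae (Filter.Eventually.of_forall fun x => by
        show Real.exp (-(x*t)) * Real.sin x = Real.exp (-(t*x)) * Real.sin x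
        rw [mul_comm x t])
    rw [h1, integral_exp_sin]
  rw [← hL, swap, hν]
  exact integral_congr_ae (Filter.Eventually.of_forall fun t => hR t)

lemma Si_sub_pi_div_two {T : ℝ} (hT : 0 < T) : |Si T - π/2| ≤ 2/T := by
  have h1 : IntegrableOn (fun t : ℝ => (1+t^2)⁻¹) (Ioi (0:ℝ)) :=
    integrable_inv_one_add_sq.integrableOn
  have hbound : ∀ᵐ t ∂(volume.restrict (Ioi (0:ℝ))),
      ‖Real.exp (-(t*T)) * (t * Real.sin T + Real.cos T) / (1+t^2)‖
        ≤ 2 * Real.exp (-T*t) := by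
    filter_upwards [ae_restrict_mem measurableSet_Ioi] with t ht
    have ht0 : (0:ℝ) < t := ht
    have h2 : |t * Real.sin T + Real.cos T| ≤ t + 1 := by
      calc |t * Real.sin T + Real.cos T| ≤ |t * Real.sin T| + |Real.cos T| := abs_add_le _ _
        _ ≤ t * 1 + 1 := by
            rw [abs_mul, abs_of_pos ht0]
            exact add_le_add (mul_le_mul_of_nonneg_left (Real.abs_sin_le_one T) ht0.le)
              (Real.abs_cos_le_one T)
        _ = t + 1 := by ring
    rw [Real.norm_eq_abs, abs_div, abs_mul, Real.abs_exp, abs_of_pos (by positivity : (0:ℝ) < 1+t^2)]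
    rw [div_le_iff₀ (by positivity : (0:ℝ) < 1+t^2), neg_mul, mul_comm t T]
    have h3 : t + 1 ≤ 2 * (1+t^2) := by nlinarith
    calc Real.exp (-(T*t)) * |t * Real.sin T + Real.cos T|
        ≤ Real.exp (-(T*t)) * (t+1) := by
          exact mul_le_mul_of_nonneg_left h2 (Real.exp_nonneg _)
      _ ≤ Real.exp (-(T*t)) * (2 * (1+t^2)) := mul_le_mul_of_nonneg_left h3 (Real.exp_nonneg _)
      _ = 2 * Real.exp (-(T*t)) * (1+t^2) := by ring
      
  have h2 : IntegrableOn
      (fun t : ℝ => Real.exp (-(t*T)) * (t * Real.sin T + Real.cos T) / (1+t^2))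
      (Ioi (0:ℝ)) := by
    refine Integrable.mono' ((exp_neg_integrableOn_Ioi 0 hT).const_mul 2) ?_ hbound
    refine Measurable.aestronglyMeasurable ?_
    exact (((measurable_id.mul_const T).neg.exp).mul
      ((measurable_id.mul_const (Real.sin T)).add_const (Real.cos T))).div
      (measurable_const.add (measurable_id.pow_const 2))
  have hsub : Si T = π/2 - ∫ t in Ioi (0:ℝ),
      Real.exp (-(t*T)) * (t * Real.sin T + Real.cos T) / (1+t^2) := by
    rw [Si_eq hT]
    have hsplit : ∀ t : ℝ, (1 - Real.exp (-(t*T)) * (t * Real.sin T + Real.cos T)) / (1+t^2)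
        = (1+t^2)⁻¹ - Real.exp (-(t*T)) * (t * Real.sin T + Real.cos T) / (1+t^2) := by
      intro t
      have : (1:ℝ)+t^2 ≠ 0 := by positivity
      field_simp
    simp_rw [hsplit]
    rw [integral_sub h1 h2]
    congr 1
    simpa using integral_Ioi_inv_one_add_sq (i := 0)
  rw [hsub]
  have : |π/2 - (π/2 - ∫ t in Ioi (0:ℝ),
      Real.exp (-(t*T)) * (t * Real.sin T + Real.cos T) / (1+t^2))| =
      |∫ t in Ioi (0:ℝ), Real.exp (-(t*T)) * (t * Real.sin T + Real.cos T) / (1+t^2)| := by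
    rw [sub_sub_cancel]
  rw [abs_sub_comm, this]
  calc |∫ t in Ioi (0:ℝ), Real.exp (-(t*T)) * (t * Real.sin T + Real.cos T) / (1+t^2)|
      ≤ ∫ t in Ioi (0:ℝ), 2 * Real.exp (-T*t) := by
        exact norm_integral_le_of_norm_le ((exp_neg_integrableOn_Ioi 0 hT).const_mul 2) hbound
    _ = 2 * T⁻¹ := by rw [MeasureTheory.integral_const_mul, integral_exp_neg_mul_Ioi' hT]
    _ = 2/T := by rw [div_eq_mul_inv]

lemma Si_tendsto : Tendsto Si atTop (𝓝 (π/2)) := by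
  have h0 : Tendsto (fun T => Si T - π/2) atTop (𝓝 0) := by
    apply squeeze_zero_norm' (a := fun T => 2/T)
    · filter_upwards [eventually_gt_atTop 0] with T hT
      simpa [Real.norm_eq_abs] using Si_sub_pi_div_two hT
    · simpa [div_eq_mul_inv] using tendsto_inv_atTop_zero.const_mul (2:ℝ)
  have := h0.add (tendsto_const_nhds (x := π/2) (f := atTop (α := ℝ)))
  simpa using this

lemma Si_bound (x : ℝ) : |Si x| ≤ 4 := by
  have key : ∀ y : ℝ, 0 ≤ y → |Si y| ≤ 4 := by
    intro y hy
    rcases le_or_gt y 1 with h | h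
    · calc |Si y| ≤ |y| := Si_abs_le y
        _ ≤ 4 := by rw [abs_of_nonneg hy]; linarith
    · have h2 := Si_sub_pi_div_two (by linarith : (0:ℝ) < y)
      have h5 : |Si y| ≤ 2/y + π/2 := by
        calc |Si y| = |(Si y - π/2) + π/2| := by rw [sub_add_cancel]
          _ ≤ |Si y - π/2| + |π/2| := abs_add_le _ _
          _ ≤ 2/y + π/2 := by
              rw [abs_of_nonneg (by positivity : (0:ℝ) ≤ π/2)]
              linarith
      have h3 : 2/y ≤ 2 := by rw [div_le_iff₀ (by linarith)]; linarith
      have h4 : π/2 ≤ 2 := by linarith [Real.pi_le_four]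
      linarith
  rcases le_or_gt 0 x with h | h
  · exact key x h
  · have := key (-x) (by linarith)
    rwa [Si_neg, abs_neg] at this

lemma Si_continuous : Continuous Si :=
  intervalIntegral.continuous_primitive sinc_intervalIntegrable 0

lemma Si_measurable : Measurable Si := Si_continuous.measurable

lemma integral_sinc_scaled (y : ℝ) {ε T : ℝ} (hε : 0 < ε) (hεT : ε ≤ T) :
    ∫ ω in Ioc ε T, Real.sin (ω*y) / ω = Si (T*y) - Si (ε*y) := by
  rcases eq_or_ne y 0 with rfl | hy
  · simp [Si]
  · rw [← intervalIntegral.integral_of_le hεT]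
    have h1 : EqOn (fun ω : ℝ => Real.sin (ω*y) / ω)
        (fun ω : ℝ => y * (Real.sin (y*ω) / (y*ω))) (uIcc ε T) := by
      intro ω hω
      rw [Set.uIcc_of_le hεT] at hω
      have hω0 : ω ≠ 0 := (hε.trans_le hω.1).ne'
      show Real.sin (ω*y)/ω = y * (Real.sin (y*ω)/(y*ω))
      rw [mul_comm ω y]
      field_simp
    rw [intervalIntegral.integral_congr h1, intervalIntegral.integral_const_mul]
    have h2 := intervalIntegral.smul_integral_comp_mul_left
      (f := fun u => Real.sin u / u) (a := ε) (b := T) y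
    rw [smul_eq_mul] at h2
    rw [h2, Si, Si, mul_comm T y, mul_comm ε y,
      intervalIntegral.integral_interval_sub_left (sinc_intervalIntegrable 0 (y*T))
        (sinc_intervalIntegrable 0 (y*ε))]

/-- Lemma 3.2: the tilted density `q(y) = e^{y-c} p(y)` has mass on `(0,∞)` given by
`1/2 + (1/π) ∫_0^∞ Re[e^{-c} M(1+iω)/(iω)] dω`, where `M(1+iω) = ∫ e^{(1+iω)y} p(y) dy`. -/
theorem tilted_density_positive_mass (p : ℝ → ℝ) (c : ℝ)
    (hmeas : Measurable p) (hpos : ∀ᵐ y : ℝ, 0 ≤ p y)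
    (hint : Integrable p) (hnorm : ∫ y : ℝ, p y = 1)
    (hexp : Integrable (fun y : ℝ => Real.exp y * p y))
    (hexpval : ∫ y : ℝ, Real.exp y * p y = Real.exp c)
    (M : ℝ → ℂ)
    (hM : ∀ ω : ℝ, M ω = ∫ y : ℝ, Complex.exp ((1 + ω * Complex.I) * y) * (p y : ℂ))
    (hI : IntegrableOn
      (fun ω : ℝ => (Complex.exp (-(c : ℂ)) * M ω / (ω * Complex.I)).re) (Set.Ioi 0)) :
    ∫ y in Set.Ioi (0 : ℝ), Real.exp (y - c) * p y
      = 1 / 2 + (1 / π) *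
          ∫ ω in Set.Ioi (0 : ℝ), (Complex.exp (-(c : ℂ)) * M ω / (ω * Complex.I)).re := by
  set q : ℝ → ℝ := fun y => Real.exp (y - c) * p y with hqdef
  set g : ℝ → ℝ := fun ω => (Complex.exp (-(c:ℂ)) * M ω / (ω * Complex.I)).re with hgdef
  have hq_eq : ∀ y, q y = Real.exp (-c) * (Real.exp y * p y) := by
    intro y
    show Real.exp (y - c) * p y = _
    rw [Real.exp_sub, Real.exp_neg]
    ring
  have hq_meas : Measurable q :=
    (Real.measurable_exp.comp (measurable_id.sub_const c)).mul hmeas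
  have hq_int : Integrable q :=
    (hexp.const_mul (Real.exp (-c))).congr
      (Filter.Eventually.of_forall fun y => (hq_eq y).symm)
  have hq_norm : ∫ y, q y = 1 := by
    calc ∫ y, q y = ∫ y, Real.exp (-c) * (Real.exp y * p y) :=
          integral_congr_ae (Filter.Eventually.of_forall hq_eq)
      _ = Real.exp (-c) * ∫ y, Real.exp y * p y := MeasureTheory.integral_const_mul _ _
      _ = 1 := by rw [hexpval, ← Real.exp_add]; simp
  -- Step A : pointwise formula for g
  have hA : ∀ ω : ℝ, ω ≠ 0 → g ω = ∫ y, q y * (Real.sin (ω*y) / ω) := by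
    intro ω hω
    have hqC : Integrable (fun y : ℝ => Complex.exp ((ω*y : ℝ) * Complex.I) * (q y : ℂ)) := by
      apply Integrable.bdd_mul hq_int.ofReal
      · exact (Complex.continuous_exp.comp (by continuity)).aestronglyMeasurable
      · refine Filter.Eventually.of_forall (fun y => (?_ : _ ≤ (1:ℝ)))
        rw [Complex.norm_exp]
        simp
    have hMrw : Complex.exp (-(c:ℂ)) * M ω
        = ∫ y : ℝ, Complex.exp ((ω*y : ℝ) * Complex.I) * (q y : ℂ) := by
      rw [hM ω, ← MeasureTheory.integral_const_mul]
      refine integral_congr_ae (Filter.Eventually.of_forall fun y => ?_)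
      show Complex.exp (-(c:ℂ)) * (Complex.exp ((1 + ω*Complex.I)*y) * (p y:ℂ))
          = Complex.exp ((ω*y : ℝ) * Complex.I) * (q y : ℂ)
      have hcast : ((q y : ℝ) : ℂ) = Complex.exp ((y:ℂ) - c) * (p y : ℂ) := by
        rw [hq_eq]
        push_cast
        rw [← mul_assoc, ← Complex.exp_add,
          show -(c:ℂ) + ↑y = (y:ℂ) - ↑c by ring]
      rw [hcast, ← mul_assoc, ← mul_assoc, ← Complex.exp_add, ← Complex.exp_add]
      congr 2
      push_cast
      ring
    have hdivre : (Complex.exp (-(c:ℂ)) * M ω / ((ω:ℂ) * Complex.I)).re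
        = (Complex.exp (-(c:ℂ)) * M ω).im / ω := by
      rw [Complex.div_re]
      simp [Complex.normSq_apply]
      rw [div_eq_div_iff (by positivity) hω]
      ring
    have him : (Complex.exp (-(c:ℂ)) * M ω).im = ∫ y, Real.sin (ω*y) * q y := by
      rw [hMrw,
        show (∫ y : ℝ, Complex.exp ((ω*y : ℝ) * Complex.I) * (q y:ℂ)).im
          = RCLike.im (∫ y : ℝ, Complex.exp ((ω*y : ℝ) * Complex.I) * (q y:ℂ)) from rfl,
        ← integral_im hqC]
      refine integral_congr_ae (Filter.Eventually.of_forall fun y => ?_)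
      show (Complex.exp ((ω*y : ℝ) * Complex.I) * (q y:ℂ)).im = Real.sin (ω*y) * q y
      rw [Complex.mul_im, Complex.ofReal_im, Complex.ofReal_re, Complex.exp_ofReal_mul_I_im]
      ring
    show (Complex.exp (-(c:ℂ)) * M ω / ((ω:ℂ) * Complex.I)).re = _
    rw [hdivre, him, ← MeasureTheory.integral_div]
    refine integral_congr_ae (Filter.Eventually.of_forall fun y => ?_)
    show Real.sin (ω*y) * q y / ω = q y * (Real.sin (ω*y)/ω)
    ring
  -- Step C : Fubini on (ε,T] × ℝ
  have hC : ∀ ε T : ℝ, 0 < ε → ε ≤ T →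
      ∫ ω in Ioc ε T, g ω = ∫ y, q y * (Si (T*y) - Si (ε*y)) := by
    intro ε T hε hεT
    have h0 : ∫ ω in Ioc ε T, g ω = ∫ ω in Ioc ε T, ∫ y, q y * (Real.sin (ω*y)/ω) := by
      refine setIntegral_congr_fun measurableSet_Ioc fun ω hω => ?_
      exact hA ω (hε.trans hω.1).ne'
    set μ := volume.restrict (Ioc ε T) with hμd
    have hps : μ.prod volume = (volume.prod volume).restrict ((Ioc ε T) ×ˢ (univ : Set ℝ)) := by
      rw [← Measure.prod_restrict, Measure.restrict_univ]
    have hmeasF : AEStronglyMeasurable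
        (fun z : ℝ × ℝ => q z.2 * (Real.sin (z.1*z.2)/z.1)) (μ.prod volume) :=
      ((hq_meas.comp measurable_snd).mul
        ((Real.measurable_sin.comp (measurable_fst.mul measurable_snd)).div
          measurable_fst)).aestronglyMeasurable
    have hIntF : Integrable (fun z : ℝ × ℝ => q z.2 * (Real.sin (z.1*z.2)/z.1)) (μ.prod volume) := by
      have hdom : Integrable (fun z : ℝ × ℝ => ε⁻¹ * |q z.2|) (μ.prod volume) := by
        apply Integrable.mul_prod (f := fun _ : ℝ => ε⁻¹) (g := fun y => |q y|)
        · exact integrableOn_const measure_Ioc_lt_top.ne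
        · exact hq_int.abs
      refine hdom.mono' hmeasF ?_
      rw [hps]
      filter_upwards [ae_restrict_mem (measurableSet_Ioc.prod MeasurableSet.univ)] with z hz
      have hz1 : ε < z.1 := hz.1.1
      have hz1' : 0 < z.1 := hε.trans hz1
      have hsinc : |Real.sin (z.1*z.2) / z.1| ≤ ε⁻¹ := by
        rw [abs_div, abs_of_pos hz1']
        rw [div_le_iff₀ hz1']
        have h1 : (1:ℝ) ≤ ε⁻¹ * z.1 := by
          have := mul_le_mul_of_nonneg_left hz1.le (inv_nonneg.2 hε.le)
          rwa [inv_mul_cancel₀ hε.ne'] at this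
        exact (Real.abs_sin_le_one _).trans h1
      rw [norm_mul, Real.norm_eq_abs, Real.norm_eq_abs, mul_comm]
      exact mul_le_mul hsinc le_rfl (abs_nonneg _) (inv_nonneg.2 hε.le)
    have swap := integral_integral_swap
      (f := fun ω y => q y * (Real.sin (ω*y)/ω)) hIntF
    rw [h0, swap]
    refine integral_congr_ae (Filter.Eventually.of_forall fun y => ?_)
    show (∫ ω, q y * (Real.sin (ω*y)/ω) ∂μ) = q y * (Si (T*y) - Si (ε*y))
    rw [hμd, MeasureTheory.integral_const_mul, integral_sinc_scaled y hε hεT]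
  -- Step D : limit ε → 0
  have hD : ∀ T : ℝ, 0 < T → ∫ ω in Ioc (0:ℝ) T, g ω = ∫ y, q y * Si (T*y) := by
    intro T hT
    set e : ℕ → ℝ := fun n => T / (n+1) with hed
    have he_pos : ∀ n, 0 < e n := fun n => div_pos hT (by positivity)
    have he_le : ∀ n, e n ≤ T := fun n =>
      div_le_self hT.le (by simp : (1:ℝ) ≤ (n:ℝ)+1)
    have hunion : (⋃ n : ℕ, Ioc (e n) T) = Ioc 0 T := by
      ext x
      simp only [mem_iUnion, mem_Ioc]
      constructor
      · rintro ⟨n, h1, h2⟩; exact ⟨(he_pos n).trans h1, h2⟩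
      · rintro ⟨h1, h2⟩
        obtain ⟨n, hn⟩ := exists_nat_gt (T / x)
        refine ⟨n, ?_, h2⟩
        show T / ((n:ℝ)+1) < x
        rw [div_lt_iff₀ (by positivity : (0:ℝ) < (n:ℝ)+1)]
        rw [div_lt_iff₀ h1] at hn
        nlinarith
    have hmono : Monotone (fun n : ℕ => Ioc (e n) T) := by
      intro m n hmn
      apply Ioc_subset_Ioc_left
      apply div_le_div_of_nonneg_left hT.le (by positivity)
      push_cast
      exact add_le_add (Nat.cast_le.2 hmn) le_rfl
    have hlim1 : Tendsto (fun n : ℕ => ∫ ω in Ioc (e n) T, g ω) atTop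
        (𝓝 (∫ ω in Ioc (0:ℝ) T, g ω)) := by
      have := tendsto_setIntegral_of_monotone (s := fun n : ℕ => Ioc (e n) T)
        (fun n => measurableSet_Ioc) hmono
        (by rw [hunion]; exact hI.mono_set Ioc_subset_Ioi_self)
      rwa [hunion] at this
    have hlim2 : Tendsto (fun n : ℕ => ∫ y, q y * (Si (T*y) - Si (e n * y))) atTop
        (𝓝 (∫ y, q y * Si (T*y))) := by
      apply tendsto_integral_of_dominated_convergence (bound := fun y => |q y| * 8)
      · intro n
        exact (hq_meas.mul ((Si_measurable.comp (measurable_const_mul T)).sub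
          (Si_measurable.comp (measurable_const_mul (e n))))).aestronglyMeasurable
      · exact hq_int.abs.mul_const 8
      · intro n
        refine Filter.Eventually.of_forall fun y => ?_
        rw [Real.norm_eq_abs, abs_mul]
        refine mul_le_mul_of_nonneg_left ?_ (abs_nonneg _)
        calc |Si (T*y) - Si (e n*y)| ≤ |Si (T*y)| + |Si (e n*y)| := abs_sub _ _
          _ ≤ 4 + 4 := add_le_add (Si_bound _) (Si_bound _)
          _ = 8 := by norm_num
      · refine Filter.Eventually.of_forall fun y => ?_
        have h1 : Tendsto (fun n : ℕ => Si (e n * y)) atTop (𝓝 0) := by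
          apply squeeze_zero_norm (a := fun n : ℕ => (T*|y|) * (1/((n:ℝ)+1)))
          · intro n
            rw [Real.norm_eq_abs]
            refine (Si_abs_le _).trans_eq ?_
            rw [abs_mul, abs_of_pos (he_pos n)]
            show T / ((n:ℝ)+1) * |y| = _
            ring
          · have := tendsto_one_div_add_atTop_nhds_zero_nat.const_mul (T*|y|)
            simpa using this
        have h2 := ((tendsto_const_nhds (x := Si (T*y)) (f := (atTop : Filter ℕ))).sub h1).const_mul (q y)
        simpa using h2
    have heq : ∀ n : ℕ, ∫ ω in Ioc (e n) T, g ω = ∫ y, q y * (Si (T*y) - Si (e n * y)) :=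
      fun n => hC (e n) T (he_pos n) (he_le n)
    exact tendsto_nhds_unique (hlim1.congr heq) hlim2
  -- Step E : limit T → ∞
  set A := ∫ y in Ioi (0:ℝ), q y with hAd
  have hE : ∫ ω in Ioi (0:ℝ), g ω = π/2 * (2*A - 1) := by
    have hunion : (⋃ n : ℕ, Ioc (0:ℝ) ((n:ℝ)+1)) = Ioi 0 := by
      ext x
      simp only [mem_iUnion, mem_Ioc, mem_Ioi]
      constructor
      · rintro ⟨n, h1, _⟩; exact h1
      · intro hx
        obtain ⟨n, hn⟩ := exists_nat_gt x
        exact ⟨n, hx, by linarith⟩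
    have hmono : Monotone (fun n : ℕ => Ioc (0:ℝ) ((n:ℝ)+1)) := fun m n hmn =>
      Ioc_subset_Ioc_right (add_le_add (Nat.cast_le.2 hmn) le_rfl)
    have hlim1 : Tendsto (fun n : ℕ => ∫ ω in Ioc (0:ℝ) ((n:ℝ)+1), g ω) atTop
        (𝓝 (∫ ω in Ioi (0:ℝ), g ω)) := by
      have := tendsto_setIntegral_of_monotone (s := fun n : ℕ => Ioc (0:ℝ) ((n:ℝ)+1))
        (fun n => measurableSet_Ioc) hmono (by rw [hunion]; exact hI)
      rwa [hunion] at this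
    set f0 : ℝ → ℝ := fun y => π/2 * (Ioi (0:ℝ)).indicator q y - π/2 * (Iio (0:ℝ)).indicator q y
      with hf0d
    have hlim2 : Tendsto (fun n : ℕ => ∫ y, q y * Si (((n:ℝ)+1)*y)) atTop (𝓝 (∫ y, f0 y)) := by
      apply tendsto_integral_of_dominated_convergence (bound := fun y => |q y| * 4)
      · intro n
        exact (hq_meas.mul (Si_measurable.comp (measurable_const_mul _))).aestronglyMeasurable
      · exact hq_int.abs.mul_const 4
      · intro n
        refine Filter.Eventually.of_forall fun y => ?_
        rw [Real.norm_eq_abs, abs_mul]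
        exact mul_le_mul_of_nonneg_left (Si_bound _) (abs_nonneg _)
      · have hae : ∀ᵐ y : ℝ, y ≠ (0:ℝ) := by
          rw [ae_iff]
          simp only [ne_eq, not_not, Set.setOf_eq_eq_singleton]
          exact measure_singleton 0
        filter_upwards [hae] with y hy
        have hTn : Tendsto (fun n : ℕ => (n:ℝ)+1) atTop atTop :=
          tendsto_atTop_add_const_right atTop 1 tendsto_natCast_atTop_atTop
        rcases lt_or_gt_of_ne hy with hneg | hpos
        · have h2 : Tendsto (fun n : ℕ => Si (((n:ℝ)+1)*(-y))) atTop (𝓝 (π/2)) :=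
            Si_tendsto.comp (hTn.atTop_mul_const (by linarith : (0:ℝ) < -y))
          have h3 : Tendsto (fun n : ℕ => Si (((n:ℝ)+1)*y)) atTop (𝓝 (-(π/2))) := by
            refine h2.neg.congr fun n => ?_
            rw [← Si_neg]
            congr 1
            ring
          have h4 := h3.const_mul (q y)
          have hf0y : f0 y = q y * -(π/2) := by
            rw [hf0d]
            show π/2 * (Ioi (0:ℝ)).indicator q y - π/2 * (Iio (0:ℝ)).indicator q y = _
            rw [Set.indicator_of_notMem (by simp only [mem_Ioi, not_lt]; linarith : y ∉ Ioi (0:ℝ)),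
              Set.indicator_of_mem (mem_Iio.2 hneg)]
            ring
          rw [hf0y]
          exact h4
        · have h2 : Tendsto (fun n : ℕ => Si (((n:ℝ)+1)*y)) atTop (𝓝 (π/2)) :=
            Si_tendsto.comp (hTn.atTop_mul_const hpos)
          have h4 := h2.const_mul (q y)
          have hf0y : f0 y = q y * (π/2) := by
            rw [hf0d]
            show π/2 * (Ioi (0:ℝ)).indicator q y - π/2 * (Iio (0:ℝ)).indicator q y = _
            rw [Set.indicator_of_mem (mem_Ioi.2 hpos),
              Set.indicator_of_notMem (by simp only [mem_Iio, not_lt]; linarith : y ∉ Iio (0:ℝ))]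
            ring
          rw [hf0y]
          exact h4
    have hIio : ∫ y in Iio (0:ℝ), q y = 1 - A := by
      have hcompl := integral_add_compl (s := Ioi (0:ℝ)) measurableSet_Ioi hq_int
      rw [hq_norm] at hcompl
      have h5 : (Ioi (0:ℝ))ᶜ = Iic 0 := by ext x; simp
      rw [h5] at hcompl
      rw [← integral_Iic_eq_integral_Iio]
      rw [← hAd] at hcompl
      linarith
    have hf0int : ∫ y, f0 y = π/2 * A - π/2 * (1 - A) := by
      rw [hf0d]
      rw [integral_sub ((hq_int.indicator measurableSet_Ioi).const_mul _)
        ((hq_int.indicator measurableSet_Iio).const_mul _)]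
      rw [MeasureTheory.integral_const_mul, MeasureTheory.integral_const_mul,
        MeasureTheory.integral_indicator measurableSet_Ioi,
        MeasureTheory.integral_indicator measurableSet_Iio,
        hIio, ← hAd]
    have heq : ∀ n : ℕ, ∫ ω in Ioc (0:ℝ) ((n:ℝ)+1), g ω = ∫ y, q y * Si (((n:ℝ)+1)*y) :=
      fun n => hD _ (by positivity)
    have := tendsto_nhds_unique (hlim1.congr heq) hlim2
    rw [this, hf0int]
    ring
  have hπ : (0:ℝ) < π := Real.pi_pos
  show A = 1/2 + (1/π) * ∫ ω in Ioi (0:ℝ), g ω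
  rw [hE, show (1/π) * (π/2*(2*A-1)) = A - 1/2 by
    rw [one_div, ← mul_assoc, ← mul_div_assoc, inv_mul_cancel₀ hπ.ne']; ring]
  ring
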